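/- Let x ∈ ℝ^m, J ⊆ {1,…,p}, D ∈ ℝ^{m×p} with D_Jᵀ D_J invertible, s ∈ {−1,1}^{|J|}, λ ≥ 0, and define α̂ ∈ ℝ^p by α̂_J = (D_Jᵀ D_J)^{-1}(D_Jᵀ x − λs) and α̂_{Jᶜ} = 0. If sign(α̂_J) = s and ‖D_{Jᶜ}ᵀ(I − P_J)x‖_∞ + λ·‖D_{Jᶜ}ᵀ D_J (D_Jᵀ D_J)^{-1}‖_∞ < λ, then α̂ is the unique minimizer of α ↦ ½‖x − Dα‖₂² + λ‖α‖₁ over ℝ^p. -/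

import Mathlib

open Real Matrix

/-- ℓ∞-norm of a finitely indexed real vector. -/
noncomputable def linfVec {ι : Type*} [Fintype ι] (x : ι → ℝ) : ℝ :=
  sSup {r : ℝ | ∃ i : ι, r = |x i|}

/-- Operator ℓ∞-norm (maximum absolute row sum) of a real matrix. -/
noncomputable def linfOp {ι κ : Type*} [Fintype ι] [Fintype κ] (A : Matrix ι κ ℝ) : ℝ :=
  sSup {r : ℝ | ∃ i : ι, r = ∑ j, |A i j|}

/-- Submatrix of the columns of `D` indexed by `J`. -/
def colSub {m p : ℕ} (D : Matrix (Fin m) (Fin p) ℝ) (J : Finset (Fin p)) :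
    Matrix (Fin m) {j // j ∈ J} ℝ := fun i j => D i j.1

/-- Submatrix of the columns of `D` outside `J`. -/
def colSubC {m p : ℕ} (D : Matrix (Fin m) (Fin p) ℝ) (J : Finset (Fin p)) :
    Matrix (Fin m) {j // j ∉ J} ℝ := fun i j => D i j.1

/-- Gram matrix of the columns of `D` indexed by `J`. -/
def gram {m p : ℕ} (D : Matrix (Fin m) (Fin p) ℝ) (J : Finset (Fin p)) :
    Matrix {j // j ∈ J} {j // j ∈ J} ℝ := (colSub D J)ᵀ * colSub D J

/-- Orthogonal projector onto the span of the columns of `D` indexed by `J`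
(assuming the corresponding Gram matrix is invertible). -/
noncomputable def projJ {m p : ℕ} (D : Matrix (Fin m) (Fin p) ℝ) (J : Finset (Fin p)) :
    Matrix (Fin m) (Fin m) ℝ := colSub D J * (gram D J)⁻¹ * (colSub D J)ᵀ

/-- Closed-form candidate solution of the Lasso supported on `J` with sign vector `s`. -/
noncomputable def lassoSol {m p : ℕ} (D : Matrix (Fin m) (Fin p) ℝ) (J : Finset (Fin p))
    (x : Fin m → ℝ) (s : {j // j ∈ J} → ℝ) (lam : ℝ) : Fin p → ℝ := fun j =>
  if h : j ∈ J then
    ((gram D J)⁻¹.mulVec (fun j' => (∑ i, D i j'.1 * x i) - lam * s j')) ⟨j, h⟩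
  else 0

/-- The Lasso objective `½‖x − Dα‖₂² + λ‖α‖₁`. -/
noncomputable def lassoObj {m p : ℕ} (D : Matrix (Fin m) (Fin p) ℝ) (x : Fin m → ℝ)
    (lam : ℝ) (α : Fin p → ℝ) : ℝ :=
  (1 / 2) * ∑ i, (x i - D.mulVec α i) ^ 2 + lam * ∑ j, |α j|

lemma linfVec_ge {ι : Type*} [Fintype ι] (x : ι → ℝ) (i : ι) : |x i| ≤ linfVec x := by
  have hset : {r : ℝ | ∃ i : ι, r = |x i|} = Set.range (fun i => |x i|) := by
    ext r; simp [eq_comm]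
  exact le_csSup (by rw [hset]; exact (Set.finite_range _).bddAbove) ⟨i, rfl⟩

lemma linfVec_nonneg {ι : Type*} [Fintype ι] (x : ι → ℝ) : 0 ≤ linfVec x := by
  rcases isEmpty_or_nonempty ι with hι | hι
  · have : {r : ℝ | ∃ i : ι, r = |x i|} = ∅ := by
      ext r; simp
    rw [linfVec, this, Real.sSup_empty]
  · obtain ⟨i⟩ := hι
    exact le_trans (abs_nonneg (x i)) (linfVec_ge x i)

lemma linfOp_ge {ι κ : Type*} [Fintype ι] [Fintype κ] (A : Matrix ι κ ℝ) (i : ι) :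
    ∑ j, |A i j| ≤ linfOp A := by
  have hset : {r : ℝ | ∃ i : ι, r = ∑ j, |A i j|} = Set.range (fun i => ∑ j, |A i j|) := by
    ext r; simp [eq_comm]
  exact le_csSup (by rw [hset]; exact (Set.finite_range _).bddAbove) ⟨i, rfl⟩

lemma linfOp_nonneg {ι κ : Type*} [Fintype ι] [Fintype κ] (A : Matrix ι κ ℝ) : 0 ≤ linfOp A := by
  rcases isEmpty_or_nonempty ι with hι | hι
  · have : {r : ℝ | ∃ i : ι, r = ∑ j, |A i j|} = ∅ := by ext r; simp
    rw [linfOp, this, Real.sSup_empty]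
  · obtain ⟨i⟩ := hι
    exact le_trans (Finset.sum_nonneg fun j _ => abs_nonneg _) (linfOp_ge A i)

lemma sum_restrict {p : ℕ} (J : Finset (Fin p)) (f : Fin p → ℝ) (hf : ∀ j ∉ J, f j = 0) :
    ∑ j, f j = ∑ j : {j // j ∈ J}, f j.1 := by
  rw [Finset.sum_coe_sort J f]
  exact (Finset.sum_subset (Finset.subset_univ J) (fun j _ hj => hf j hj)).symm

lemma sign_pos_of_eq_one {y : ℝ} (h : Real.sign y = 1) : 0 < y := by
  rcases lt_trichotomy y 0 with hy | hy | hy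
  · rw [Real.sign_of_neg hy] at h; norm_num at h
  · rw [hy, Real.sign_zero] at h; norm_num at h
  · exact hy

lemma sign_neg_of_eq_neg_one {y : ℝ} (h : Real.sign y = -1) : y < 0 := by
  rcases lt_trichotomy y 0 with hy | hy | hy
  · exact hy
  · rw [hy, Real.sign_zero] at h; norm_num at h
  · rw [Real.sign_of_pos hy] at h; norm_num at h

/-- Exact sign-recovery certificate for the Lasso: under the sign condition and the
strict dual feasibility condition, the closed-form vector `α̂` is the unique minimizer. -/
theorem stmt_9 {m p : ℕ} (x : Fin m → ℝ) (J : Finset (Fin p))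
    (D : Matrix (Fin m) (Fin p) ℝ) (hG : IsUnit (gram D J))
    (s : {j // j ∈ J} → ℝ) (hs : ∀ j, s j = 1 ∨ s j = -1)
    (lam : ℝ) (hlam : 0 ≤ lam)
    (hsign : ∀ j : {j // j ∈ J},
      Real.sign (((gram D J)⁻¹.mulVec
        (fun j' => (∑ i, D i j'.1 * x i) - lam * s j')) j) = s j)
    (hcert :
      linfVec (fun j : {j // j ∉ J} =>
          ∑ i, D i j.1 * (x i - (projJ D J).mulVec x i)) +
        lam * linfOp ((colSubC D J)ᵀ * colSub D J * (gram D J)⁻¹) < lam) :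
    ∀ α : Fin p → ℝ, α ≠ lassoSol D J x s lam →
      lassoObj D x lam (lassoSol D J x s lam) < lassoObj D x lam α := by
  classical
  intro α hne
  set ah : Fin p → ℝ := lassoSol D J x s lam with hahdef
  set β : {j // j ∈ J} → ℝ :=
    (gram D J)⁻¹.mulVec (fun j' => (∑ i, D i j'.1 * x i) - lam * s j') with hβ
  set G := gram D J with hGdef
  have hdet : IsUnit G.det := (Matrix.isUnit_iff_isUnit_det _).mp hG
  set M := (colSubC D J)ᵀ * colSub D J * G⁻¹ with hM
  set AC : {j // j ∉ J} → ℝ := fun j : {j // j ∉ J} =>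
      ∑ i, D i j.1 * (x i - (projJ D J).mulVec x i) with hAC
  clear_value ah β G M AC
  have hahJ : ∀ (j : Fin p) (h : j ∈ J), ah j = β ⟨j, h⟩ := by
    intro j h
    simp only [hahdef, lassoSol, dif_pos h, hβ, hGdef]
  have hahC : ∀ j ∉ J, ah j = 0 := by
    intro j h; simp only [hahdef, lassoSol, dif_neg h]
  -- lam > 0
  have hlampos : 0 < lam := by
    have h1 := linfVec_nonneg AC
    have h2 := linfOp_nonneg M
    nlinarith [hcert]
  -- u := D_J^T x
  have hvx : (colSub D J)ᵀ.mulVec x = fun j' : {j // j ∈ J} => ∑ i, D i j'.1 * x i := by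
    funext k
    simp [Matrix.mulVec, dotProduct, colSub, Matrix.transpose_apply]
  have hβ2 : β = G⁻¹.mulVec ((colSub D J)ᵀ.mulVec x - lam • s) := by
    rw [hβ]
    congr 1
  have hGβ : G.mulVec β = (colSub D J)ᵀ.mulVec x - lam • s := by
    rw [hβ2, Matrix.mulVec_mulVec, Matrix.mul_nonsing_inv _ hdet, Matrix.one_mulVec]
  set r : Fin m → ℝ := fun i => x i - D.mulVec ah i with hr
  set W : Fin p → ℝ := fun j => ∑ i, D i j * r i with hW
  clear_value r W
  have hDah : D.mulVec ah = (colSub D J).mulVec β := by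
    funext i
    simp only [Matrix.mulVec, dotProduct]
    rw [sum_restrict J (fun j => D i j * ah j) (fun j hj => by simp [hahC j hj])]
    apply Finset.sum_congr rfl
    intro j _
    rw [hahJ j.1 j.2]
    rfl
  have hrw : r = x - (colSub D J).mulVec β := by
    funext i
    simp [hr, hDah]
  -- W on J
  have hWJvec : (colSub D J)ᵀ.mulVec r = lam • s := by
    rw [hrw, Matrix.mulVec_sub, Matrix.mulVec_mulVec]
    have hgr : (colSub D J)ᵀ * colSub D J = G := by rw [hGdef]; rfl
    rw [hgr, hGβ]
    abel
  have hWJ : ∀ (j : Fin p) (h : j ∈ J), W j = lam * s ⟨j, h⟩ := by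
    intro j h
    have := congrFun hWJvec ⟨j, h⟩
    simpa [Matrix.mulVec, dotProduct, colSub, Matrix.transpose_apply, hW,
      smul_eq_mul] using this
  -- W off J
  have hMv : ∀ c : {j // j ∈ J} → ℝ,
      M.mulVec c = (colSubC D J)ᵀ.mulVec ((colSub D J).mulVec (G⁻¹.mulVec c)) := by
    intro c
    simp [hM, Matrix.mulVec_mulVec, Matrix.mul_assoc]
  have hPx : (projJ D J).mulVec x = (colSub D J).mulVec (G⁻¹.mulVec ((colSub D J)ᵀ.mulVec x)) := by
    rw [projJ, ← hGdef]
    simp [← Matrix.mulVec_mulVec]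
  have hACvec : AC = (colSubC D J)ᵀ.mulVec (x - (projJ D J).mulVec x) := by
    funext jc
    simp [hAC, Matrix.mulVec, dotProduct, colSubC, Matrix.transpose_apply]
  have step : (colSubC D J)ᵀ.mulVec r = AC + lam • M.mulVec s := by
    rw [hrw, hβ2, Matrix.mulVec_sub, Matrix.mulVec_sub, Matrix.mulVec_smul,
      Matrix.mulVec_sub, Matrix.mulVec_smul, Matrix.mulVec_sub, Matrix.mulVec_smul,
      hACvec, hPx, hMv s, Matrix.mulVec_sub]
    abel
  have hWCj : ∀ (j : Fin p) (h : j ∉ J), W j = AC ⟨j, h⟩ + lam * M.mulVec s ⟨j, h⟩ := by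
    intro j h
    have := congrFun step ⟨j, h⟩
    simpa [Matrix.mulVec, dotProduct, colSubC, Matrix.transpose_apply, hW,
      smul_eq_mul] using this
  have hMs : ∀ k, |M.mulVec s k| ≤ linfOp M := by
    intro k
    have h1 : |M.mulVec s k| ≤ ∑ j, |M k j * s j| := by
      simp only [Matrix.mulVec, dotProduct]
      exact Finset.abs_sum_le_sum_abs _ _
    have h2 : ∑ j, |M k j * s j| = ∑ j, |M k j| := by
      apply Finset.sum_congr rfl
      intro j _
      rcases hs j with h | h <;> simp [h, abs_mul]
    exact h1.trans (h2.le.trans (linfOp_ge M k))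
  have hWCbound : ∀ j ∉ J, |W j| < lam := by
    intro j h
    calc |W j| = |AC ⟨j, h⟩ + lam * M.mulVec s ⟨j, h⟩| := by rw [hWCj j h]
      _ ≤ |AC ⟨j, h⟩| + lam * |M.mulVec s ⟨j, h⟩| := by
          refine (abs_add_le _ _).trans ?_
          rw [abs_mul, abs_of_nonneg hlam]
      _ ≤ linfVec AC + lam * linfOp M :=
          add_le_add (linfVec_ge AC _) (mul_le_mul_of_nonneg_left (hMs _) hlam)
      _ < lam := hcert
  -- sign facts
  have hsβ : ∀ k : {j // j ∈ J}, |β k| = s k * β k := by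
    intro k
    have hk := hsign k
    rcases hs k with h | h
    · rw [h] at hk ⊢
      rw [abs_of_pos (sign_pos_of_eq_one hk), one_mul]
    · rw [h] at hk ⊢
      rw [abs_of_neg (sign_neg_of_eq_neg_one hk)]
      ring
  -- main decomposition
  set e : Fin p → ℝ := fun j => α j - ah j with he
  clear_value e
  have hαe : α = ah + e := by
    funext j
    simp only [Pi.add_apply, he]
    ring
  have hDe : D.mulVec α = D.mulVec ah + D.mulVec e := by
    rw [hαe, Matrix.mulVec_add]
  have hswap : ∑ i, r i * D.mulVec e i = ∑ j, e j * W j := by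
    calc ∑ i, r i * D.mulVec e i = ∑ i, ∑ j, r i * (D i j * e j) := by
          apply Finset.sum_congr rfl
          intro i _
          simp [Matrix.mulVec, dotProduct, Finset.mul_sum]
      _ = ∑ j, ∑ i, r i * (D i j * e j) := Finset.sum_comm
      _ = ∑ j, e j * W j := by
          apply Finset.sum_congr rfl
          intro j _
          rw [hW]
          simp only [Finset.mul_sum]
          apply Finset.sum_congr rfl
          intro i _
          ring
  have key : lassoObj D x lam α = lassoObj D x lam ah +
      ((1/2) * ∑ i, (D.mulVec e i)^2 + ∑ j, (lam * |α j| - lam * |ah j| - e j * W j)) := by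
    have hsq : ∀ i, (x i - D.mulVec α i)^2
        = (x i - D.mulVec ah i)^2 + (D.mulVec e i)^2 - 2*(r i * D.mulVec e i) := by
      intro i
      rw [congrFun hDe i]
      simp only [hr, Pi.add_apply]
      ring
    simp only [lassoObj]
    rw [Finset.sum_congr rfl (fun i _ => hsq i)]
    rw [Finset.sum_sub_distrib, Finset.sum_add_distrib, ← Finset.mul_sum, hswap]
    rw [Finset.sum_sub_distrib, Finset.sum_sub_distrib, ← Finset.mul_sum, ← Finset.mul_sum]
    ring
  -- per-term bounds
  have hT : ∀ j, 0 ≤ lam * |α j| - lam * |ah j| - e j * W j := by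
    intro j
    by_cases hj : j ∈ J
    · have h1 : ah j = β ⟨j, hj⟩ := hahJ j hj
      have h2 : W j = lam * s ⟨j, hj⟩ := hWJ j hj
      have h3 := hsβ ⟨j, hj⟩
      have hsj : s ⟨j, hj⟩ * α j ≤ |α j| := by
        rcases hs ⟨j, hj⟩ with h | h <;> rw [h]
        · rw [one_mul]; exact le_abs_self _
        · rw [neg_one_mul]; exact neg_le_abs _
      have hej : e j = α j - β ⟨j, hj⟩ := by rw [he]; simp [h1]
      rw [h1, h2, hej, h3]
      nlinarith [mul_nonneg hlam (sub_nonneg.2 hsj)]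
    · have h1 : ah j = 0 := hahC j hj
      have hej : e j = α j := by rw [he]; simp [h1]
      have hb := (hWCbound j hj).le
      have h2 : α j * W j ≤ |α j| * lam := by
        calc α j * W j ≤ |α j * W j| := le_abs_self _
          _ = |α j| * |W j| := abs_mul _ _
          _ ≤ |α j| * lam := mul_le_mul_of_nonneg_left hb (abs_nonneg _)
      rw [h1, hej]
      simp only [abs_zero, mul_zero]
      nlinarith
  have hTstrict : ∀ j ∉ J, α j ≠ 0 → 0 < lam * |α j| - lam * |ah j| - e j * W j := by
    intro j hj hα
    have h1 : ah j = 0 := hahC j hj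
    have hej : e j = α j := by rw [he]; simp [h1]
    have hb := hWCbound j hj
    have habs : 0 < |α j| := abs_pos.2 hα
    have h2 : α j * W j < |α j| * lam := by
      calc α j * W j ≤ |α j| * |W j| := by
            calc α j * W j ≤ |α j * W j| := le_abs_self _
              _ = |α j| * |W j| := abs_mul _ _
        _ < |α j| * lam := by exact mul_lt_mul_of_pos_left hb habs
    rw [h1, hej]
    simp only [abs_zero, mul_zero]
    nlinarith
  suffices hpos : 0 < (1/2) * ∑ i, (D.mulVec e i)^2
      + ∑ j, (lam * |α j| - lam * |ah j| - e j * W j) by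
    rw [key]; linarith
  by_cases hcase : ∀ j ∉ J, α j = 0
  · -- e supported on J and nonzero ⇒ quadratic term positive
    have he0 : ∀ j ∉ J, e j = 0 := by
      intro j hj
      rw [he]
      simp [hcase j hj, hahC j hj]
    have hene : e ≠ 0 := by
      intro h0
      apply hne
      funext j
      have := congrFun h0 j
      rw [he] at this
      simp only [Pi.zero_apply] at this
      linarith
    have hq : 0 < ∑ i, (D.mulVec e i)^2 := by
      rcases (Finset.sum_nonneg fun i (_ : i ∈ Finset.univ) => sq_nonneg (D.mulVec e i)).lt_or_eq
        with hlt | heq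
      · exact hlt
      exfalso
      have hDe0 : ∀ i, D.mulVec e i = 0 := by
        intro i
        have := (Finset.sum_eq_zero_iff_of_nonneg
          (fun i (_ : i ∈ Finset.univ) => sq_nonneg (D.mulVec e i))).1 heq.symm i (Finset.mem_univ i)
        exact pow_eq_zero_iff (two_ne_zero) |>.1 this
      have hrestrict : ∀ i, D.mulVec e i = ∑ j : {j // j ∈ J}, D i j.1 * e j.1 := by
        intro i
        simp only [Matrix.mulVec, dotProduct]
        exact sum_restrict J (fun j => D i j * e j) (fun j hj => by simp [he0 j hj])
      set eJ : {j // j ∈ J} → ℝ := fun j => e j.1 with heJ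
      clear_value eJ
      have hcolSubeJ : (colSub D J).mulVec eJ = D.mulVec e := by
        funext i
        rw [hrestrict i]
        simp [Matrix.mulVec, dotProduct, colSub, heJ]
      have hGe : G.mulVec eJ = 0 := by
        have hsplit : G.mulVec eJ = (colSub D J)ᵀ.mulVec (D.mulVec e) := by
          rw [← hcolSubeJ, hGdef, _root_.gram, ← Matrix.mulVec_mulVec]
        rw [hsplit, show D.mulVec e = 0 from funext hDe0, Matrix.mulVec_zero]
      have heJ0 : eJ = 0 := by
        have h2 := congrArg (fun w => G⁻¹.mulVec w) hGe
        simpa [Matrix.mulVec_mulVec, Matrix.nonsing_inv_mul _ hdet, Matrix.one_mulVec,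
          Matrix.mulVec_zero] using h2
      apply hene
      funext j
      by_cases hj : j ∈ J
      · have := congrFun heJ0 ⟨j, hj⟩
        simpa [heJ] using this
      · simpa using he0 j hj
    have hsn : 0 ≤ ∑ j, (lam * |α j| - lam * |ah j| - e j * W j) :=
      Finset.sum_nonneg fun j _ => hT j
    linarith
  · push_neg at hcase
    obtain ⟨j₀, hj₀, hj₀ne⟩ := hcase
    have hp := hTstrict j₀ hj₀ hj₀ne
    have hsum : 0 < ∑ j, (lam * |α j| - lam * |ah j| - e j * W j) :=
      Finset.sum_pos' (fun j _ => hT j) ⟨j₀, Finset.mem_univ j₀, hp⟩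
    have hq0 : 0 ≤ ∑ i, (D.mulVec e i)^2 := Finset.sum_nonneg fun i _ => sq_nonneg _
    linarith
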